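/- If I is a nonempty indexing set and 𝒰_i is a maximal join-specification for a poset P for each i ∈ I, then ⋂_I 𝒰_i is also a maximal join-specification. -/
import Mathlib


variable {P : Type*} [PartialOrder P]

/-- Down-closure of a set. -/
def dcl (S : Set P) : Set P := {p | ∃ s ∈ S, p ≤ s}

/-- Principal downset. -/
def pd (p : P) : Set P := {q | q ≤ p}

/-- Standard closure operator: extensive, monotone, idempotent, with Γ({p}) = p↓. -/
def IsStdClosure (Γ : Set P → Set P) : Prop :=
  (∀ S, S ⊆ Γ S) ∧ (∀ S T : Set P, S ⊆ T → Γ S ⊆ Γ T) ∧ (∀ S, Γ (Γ S) = Γ S) ∧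
    ∀ p : P, Γ {p} = pd p

def IsClosedIn (Γ : Set P → Set P) (C : Set P) : Prop := Γ C = C

/-- Join-specification: all joins of members exist, and all singletons belong. -/
def IsJoinSpec (𝒰 : Set (Set P)) : Prop :=
  (∀ S ∈ 𝒰, ∃ x : P, IsLUB S x) ∧ ∀ p : P, {p} ∈ 𝒰

/-- 𝒰-ideal: down-closed and closed under joins of members of 𝒰. -/
def IsUIdeal (𝒰 : Set (Set P)) (I : Set P) : Prop :=
  IsLowerSet I ∧ ∀ S ∈ 𝒰, S ⊆ I → ∀ x : P, IsLUB S x → x ∈ I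

/-- The smallest 𝒰-ideal containing S. -/
def GammaU (𝒰 : Set (Set P)) (S : Set P) : Set P :=
  ⋂₀ {I : Set P | IsUIdeal 𝒰 I ∧ S ⊆ I}

/-- 𝒰⁺: sets whose join exists and lies in the 𝒰-ideal closure. -/
def UPlus (𝒰 : Set (Set P)) : Set (Set P) :=
  {S : Set P | ∃ x : P, IsLUB S x ∧ x ∈ GammaU 𝒰 S}

/-- Υ_𝒰(S) = { ⋁T : T ∈ 𝒰⁺, T ⊆ S↓ }. -/
def Upsilon (𝒰 : Set (Set P)) (S : Set P) : Set P :=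
  {x : P | ∃ T ∈ UPlus 𝒰, T ⊆ dcl S ∧ IsLUB T x}

/-- The complete lattice of 𝒰-ideals (meets = intersections, joins = closure of unions)
is a frame. -/
def IdealFrame (𝒰 : Set (Set P)) : Prop :=
  ∀ D : Set P, IsUIdeal 𝒰 D → ∀ 𝒞 : Set (Set P), (∀ C ∈ 𝒞, IsUIdeal 𝒰 C) →
    D ∩ GammaU 𝒰 (⋃₀ 𝒞) = GammaU 𝒰 (⋃ C ∈ 𝒞, D ∩ C)

/-- The complete lattice of Γ-closed sets is a frame. -/
def ClosFrame (Γ : Set P → Set P) : Prop :=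
  ∀ D : Set P, IsClosedIn Γ D → ∀ 𝒞 : Set (Set P), (∀ C ∈ 𝒞, IsClosedIn Γ C) →
    D ∩ Γ (⋃₀ 𝒞) = Γ (⋃ C ∈ 𝒞, D ∩ C)

theorem stmt8 {ι : Type*} [Nonempty ι] (𝒰 : ι → Set (Set P))
    (hU : ∀ i, IsJoinSpec (𝒰 i)) (hmax : ∀ i, UPlus (𝒰 i) = 𝒰 i) :
    IsJoinSpec (⋂ i, 𝒰 i) ∧ UPlus (⋂ i, 𝒰 i) = ⋂ i, 𝒰 i := by
  set V := ⋂ i, 𝒰 i with hV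
  have hmono : ∀ i (S : Set P), GammaU V S ⊆ GammaU (𝒰 i) S := by
    intro i S x hx I hI
    exact hx I ⟨⟨hI.1.1, fun T hT hTI => hI.1.2 T (Set.mem_iInter.mp hT i) hTI⟩, hI.2⟩
  have hsup : ∀ S ∈ V, S ∈ UPlus V := by
    intro S hS
    obtain ⟨x, hx⟩ := (hU (Classical.arbitrary ι)).1 S
      (Set.mem_iInter.mp hS (Classical.arbitrary ι))
    exact ⟨x, hx, fun I hI => hI.1.2 S hS hI.2 x hx⟩
  have hspec : IsJoinSpec V := by
    constructor
    · intro S hS; obtain ⟨x, hx, _⟩ := hsup S hS; exact ⟨x, hx⟩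
    · intro p; exact Set.mem_iInter.mpr fun i => (hU i).2 p
  refine ⟨hspec, Set.Subset.antisymm ?_ hsup⟩
  rintro S ⟨x, hx, hxG⟩
  refine Set.mem_iInter.mpr fun i => ?_
  rw [← hmax i]
  exact ⟨x, hx, hmono i S hxG⟩
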